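/- If F(x₀) + C is nonempty and convex and the family {φ_{F,w*} : w* ∈ W*} is lower equicontinuous at x₀, then the map F^C(x) = F(x) + C (with F^C(x) = ∅ when F(x) = ∅) is upper Hausdorff continuous at x₀. -/

import Mathlib

open Pointwise Set Filter Topology

/-- Scalarization of a set `A ⊆ Y` by a weak-star functional: `inf {w(a) : a ∈ A}` in `EReal`
(with `inf ∅ = +∞`). -/
noncomputable def scal {Y : Type*} [AddCommMonoid Y] [Module ℝ Y] [TopologicalSpace Y]
    (w : WeakDual ℝ Y) (A : Set Y) : EReal :=
  sInf ((fun a => ((w a : ℝ) : EReal)) '' A)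

/-- `F` is `C`-convex. -/
def CConvex {X Y : Type*} [AddCommGroup X] [Module ℝ X] [AddCommGroup Y] [Module ℝ Y]
    (F : X → Set Y) (C : Set Y) : Prop :=
  ∀ x₁ x₂ : X, ∀ t : ℝ, t ∈ Set.Icc (0 : ℝ) 1 →
    t • F x₁ + (1 - t) • F x₂ ⊆ F (t • x₁ + (1 - t) • x₂) + C

/-- Lower Dini directional derivative of `φ : X → EReal` at `x` in direction `d`:
`liminf_{t → 0+} (φ (x + t • d) - φ x) * (1/t)`. -/
noncomputable def diniX {X : Type*} [AddCommGroup X] [Module ℝ X]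
    (φ : X → EReal) (x d : X) : EReal :=
  Filter.liminf (fun t : ℝ => (φ (x + t • d) - φ x) * (((1 : ℝ) / t : ℝ) : EReal))
    (nhdsWithin 0 (Set.Ioi 0))

set_option maxHeartbeats 1000000 in
theorem stmt_16 {X Y : Type*} [AddCommGroup X] [Module ℝ X] [TopologicalSpace X]
    [IsTopologicalAddGroup X]
    [AddCommGroup Y] [Module ℝ Y] [TopologicalSpace Y]
    [IsTopologicalAddGroup Y] [ContinuousSMul ℝ Y] [LocallyConvexSpace ℝ Y] [T2Space Y]
    (C : Set Y) (hclosed : IsClosed C) (hconv : Convex ℝ C)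
    (hcone : ∀ c ∈ C, ∀ r : ℝ, 0 ≤ r → r • c ∈ C)
    (hint : (interior C).Nonempty) (hCne : C ≠ Set.univ)
    (Wstar : Set (WeakDual ℝ Y)) (hWcpt : IsCompact Wstar)
    (hWsub : ∀ w ∈ Wstar, ∀ c ∈ C, 0 ≤ w c) (hW0 : (0 : WeakDual ℝ Y) ∉ Wstar)
    (hWbase : ∀ w : WeakDual ℝ Y, (∀ c ∈ C, 0 ≤ w c) → w ≠ 0 →
      ∃ t : ℝ, 0 < t ∧ ∃ w' ∈ Wstar, w = t • w')
    (F : X → Set Y) (x₀ : X) (hx₀ : (F x₀ + C).Nonempty) (hconvx₀ : Convex ℝ (F x₀ + C))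
    (hequi : ∀ ε : ℝ, 0 < ε → ∃ V ∈ nhds (0 : X), ∀ x : X, x - x₀ ∈ V →
      ∀ w ∈ Wstar, scal w (F x₀) ≤ scal w (F x) + ((ε : ℝ) : EReal)) :
    ∀ U ∈ nhds (0 : Y), ∃ V ∈ nhds (0 : X), ∀ x : X, x - x₀ ∈ V →
      F x + C ⊆ (F x₀ + C) + U := by
  classical
  obtain ⟨e, he⟩ := hint
  have heC : e ∈ C := interior_subset he
  have h0C : (0 : Y) ∈ C := by simpa using hcone e heC 0 le_rfl
  have hCC : ∀ c₁ ∈ C, ∀ c₂ ∈ C, c₁ + c₂ ∈ C := by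
    intro c₁ h₁ c₂ h₂
    have hmid : (1/2 : ℝ) • c₁ + (1/2 : ℝ) • c₂ ∈ C := by
      have := hconv h₁ h₂ (by norm_num : (0:ℝ) ≤ 1/2) (by norm_num : (0:ℝ) ≤ 1/2)
        (by norm_num)
      simpa using this
    have h2 := hcone _ hmid 2 (by norm_num)
    rw [smul_add, smul_smul, smul_smul] at h2
    norm_num at h2
    exact h2
  -- every w ∈ Wstar is positive at e
  have hpos : ∀ w ∈ Wstar, 0 < w e := by
    intro w hw
    rcases lt_or_ge 0 (w e) with h | h
    · exact h
    have hwe : w e = 0 := le_antisymm h (hWsub w hw e heC)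
    exfalso
    apply hW0
    have hwzero : w = 0 := by
      have key : ∀ z : Y, 0 ≤ w z := by
        intro z
        have hcont : Tendsto (fun t : ℝ => e + t • z) (𝓝 0) (𝓝 e) := by
          have h1 : Continuous fun t : ℝ => e + t • z :=
            continuous_const.add (continuous_id.smul continuous_const)
          have := h1.tendsto 0
          simpa using this
        have hmem : {t : ℝ | e + t • z ∈ interior C} ∈ 𝓝 (0:ℝ) :=
          hcont (isOpen_interior.mem_nhds he)
        obtain ⟨r, hr, hball⟩ := Metric.mem_nhds_iff.mp hmem
        have ht : e + (r/2) • z ∈ C := by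
          have hb : (r/2 : ℝ) ∈ Metric.ball (0:ℝ) r := by
            have h5 : |r| / 2 < r := by rw [abs_of_pos hr]; linarith
            simpa [Metric.mem_ball, Real.dist_eq] using h5
          exact interior_subset (hball hb)
        have := hWsub w hw _ ht
        have happ : w (e + (r/2) • z) = w e + (r/2) * w z := by
          simp [map_add, map_smul]
        rw [happ, hwe] at this
        nlinarith [half_pos hr]
      apply DFunLike.ext
      intro z
      have h1 := key z
      have h2 := key (-z)
      have h3 : w (-z) = -(w z) := map_neg w z
      rw [h3] at h2
      have h4 : (0 : WeakDual ℝ Y) z = 0 := rfl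
      rw [h4]
      linarith
    rw [← hwzero]; exact hw
  -- uniform lower bound on e
  obtain ⟨δ, hδpos, hδ⟩ : ∃ δ : ℝ, 0 < δ ∧ ∀ w ∈ Wstar, δ ≤ w e := by
    rcases Wstar.eq_empty_or_nonempty with h | hne
    · exact ⟨1, one_pos, by simp [h]⟩
    · have hc : Continuous fun w : WeakDual ℝ Y => w e := WeakDual.eval_continuous e
      obtain ⟨w₀, hw₀, hmin⟩ := hWcpt.exists_isMinOn hne hc.continuousOn
      exact ⟨w₀ e, hpos w₀ hw₀, fun w hw => hmin hw⟩
  intro U hU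
  -- convex open neighborhood inside U
  obtain ⟨S, hSU, hSnhds, hSconv⟩ :
      ∃ S, S ⊆ U ∧ S ∈ nhds (0 : Y) ∧ Convex ℝ S := by
    obtain ⟨S, ⟨hS1, hS2⟩, hS3⟩ := (LocallyConvexSpace.convex_basis_zero ℝ Y).mem_iff.mp hU
    exact ⟨S, hS3, hS1, hS2⟩
  have h0U₀ : (0 : Y) ∈ interior S := mem_interior_iff_mem_nhds.mpr hSnhds
  -- pick s > 0 with (-s) • e ∈ interior S
  obtain ⟨s, hs, hse⟩ : ∃ s : ℝ, 0 < s ∧ (-s) • e ∈ interior S := by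
    have h1 : Continuous fun t : ℝ => t • e := continuous_id.smul continuous_const
    have hcont : Tendsto (fun t : ℝ => t • e) (𝓝 0) (𝓝 0) := by
      have := h1.tendsto 0
      simpa using this
    have hmem : {t : ℝ | t • e ∈ interior S} ∈ 𝓝 (0:ℝ) :=
      hcont (isOpen_interior.mem_nhds h0U₀)
    obtain ⟨r, hr, hball⟩ := Metric.mem_nhds_iff.mp hmem
    refine ⟨r/2, half_pos hr, hball ?_⟩
    have h5 : |r| / 2 < r := by rw [abs_of_pos hr]; linarith
    simpa [Metric.mem_ball, Real.dist_eq] using h5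
  set ε : ℝ := s * δ / 4 with hεdef
  have hεpos : 0 < ε := by positivity
  obtain ⟨V, hV, hVprop⟩ := hequi ε hεpos
  refine ⟨V, hV, ?_⟩
  intro x hx y hy
  by_contra hyU
  set A : Set Y := F x₀ + C with hA
  have hAC : ∀ a ∈ A, ∀ c ∈ C, a + c ∈ A := by
    rintro a ⟨b, hb, c₀, hc₀, rfl⟩ c hc
    exact ⟨b, hb, c₀ + c, hCC c₀ hc₀ c hc, (add_assoc b c₀ c).symm⟩
  have hyU₀ : y ∉ A + interior S := by
    intro hmem
    exact hyU (Set.add_subset_add_left (interior_subset.trans hSU) hmem)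
  have hopen : IsOpen (A + interior S) := isOpen_interior.add_left
  have hconvAS : Convex ℝ (A + interior S) := hconvx₀.add hSconv.interior
  obtain ⟨f, hf⟩ := geometric_hahn_banach_open_point hconvAS hopen hyU₀
  obtain ⟨a₀, ha₀⟩ := hx₀
  have ha₀y : f a₀ < f y := by
    have := hf (a₀ + 0) (Set.add_mem_add ha₀ h0U₀)
    simpa using this
  -- f is nonpositive on C
  have hfC : ∀ c ∈ C, f c ≤ 0 := by
    intro c hc
    by_contra hfc
    push_neg at hfc
    set r : ℝ := (f y - f a₀ + 1) / f c with hrdef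
    have hrpos : 0 ≤ r := div_nonneg (by linarith) hfc.le
    have hmem : a₀ + r • c ∈ A := hAC a₀ ha₀ _ (hcone c hc r hrpos)
    have h2 := hf ((a₀ + r • c) + 0) (Set.add_mem_add hmem h0U₀)
    have h3 : f a₀ + r * f c < f y := by
      simpa [map_add, map_smul] using h2
    have h4 : r * f c = f y - f a₀ + 1 := by
      rw [hrdef]; field_simp
    linarith
  -- the separating functional as a weak-dual element
  set w : WeakDual ℝ Y := -f with hwdef
  have hwapp : ∀ z : Y, w z = -(f z) := fun z => rfl
  have hwC : ∀ c ∈ C, 0 ≤ w c := by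
    intro c hc
    rw [hwapp]
    linarith [hfC c hc]
  have hwne : w ≠ 0 := by
    intro h
    have h1 : w a₀ = 0 := by rw [h]; rfl
    have h2 : w y = 0 := by rw [h]; rfl
    rw [hwapp] at h1 h2
    linarith
  obtain ⟨t, ht, w', hw', hweq⟩ := hWbase w hwC hwne
  have hw'app : ∀ z : Y, w z = t * w' z := by
    intro z
    rw [hweq]; rfl
  -- key estimate: for all a ∈ F x₀, w' y + s*δ ≤ w' a
  have hkey : ∀ a ∈ F x₀, w' y + s * δ ≤ w' a := by
    intro a haF
    have haA : a ∈ A := ⟨a, haF, 0, h0C, add_zero a⟩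
    have h1 := hf (a + (-s) • e) (Set.add_mem_add haA hse)
    have h2 : f a - s * f e < f y := by
      simpa [map_add, map_smul, sub_eq_add_neg, neg_mul] using h1
    -- rewrite in terms of w'
    have hfa : f a = -(t * w' a) := by
      have := hwapp a; rw [hw'app a] at this; linarith
    have hfe : f e = -(t * w' e) := by
      have := hwapp e; rw [hw'app e] at this; linarith
    have hfy : f y = -(t * w' y) := by
      have := hwapp y; rw [hw'app y] at this; linarith
    rw [hfa, hfe, hfy] at h2
    have hδe : δ ≤ w' e := hδ w' hw'
    have h3 : t * w' y < t * (w' a - s * w' e) := by linarith [h2]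
    have h4 : w' y < w' a - s * w' e := lt_of_mul_lt_mul_left h3 ht.le
    linarith [h4, mul_le_mul_of_nonneg_left hδe hs.le]
  -- scal inequalities
  have hL : ((w' y + s * δ : ℝ) : EReal) ≤ scal w' (F x₀) := by
    apply le_sInf
    rintro z ⟨a, haF, rfl⟩
    exact EReal.coe_le_coe_iff.mpr (hkey a haF)
  have hM : scal w' (F x) ≤ ((w' y : ℝ) : EReal) := by
    obtain ⟨b, hb, c, hc, rfl⟩ := hy
    have h1 : scal w' (F x) ≤ ((w' b : ℝ) : EReal) :=
      sInf_le ⟨b, hb, rfl⟩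
    refine h1.trans ?_
    have : w' b ≤ w' (b + c) := by
      have := hWsub w' hw' c hc
      simp [map_add]
      linarith
    exact_mod_cast this
  have hE := hVprop x hx w' hw'
  have hcontr : scal w' (F x₀) < scal w' (F x₀) := by
    calc scal w' (F x₀) ≤ scal w' (F x) + ((ε : ℝ) : EReal) := hE
      _ ≤ ((w' y : ℝ) : EReal) + ((ε : ℝ) : EReal) := by
          exact add_le_add_left hM _
      _ = ((w' y + ε : ℝ) : EReal) := by rw [EReal.coe_add]
      _ < ((w' y + s * δ : ℝ) : EReal) := by
          apply EReal.coe_lt_coe_iff.mpr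
          have : ε < s * δ := by rw [hεdef]; nlinarith
          linarith
      _ ≤ scal w' (F x₀) := hL
  exact lt_irrefl _ hcontr
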